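/- Let M be a matroid with finite ground set and let F be a flat of M. Then F is a modular flat (i.e., for every flat G of M one has M.rk F + M.rk G = M.rk (F ∪ G) + M.rk (F ∩ G)) if and only if for every flat G of M and every flat H of M with H ⊆ F one has M.closure ((F ∩ G) ∪ H) = F ∩ M.closure (G ∪ H). -/

import Mathlib

open Matroid Set

/-- The rank of a set `X` in a matroid `M`: the largest cardinality of an independent
subset of `X`. -/
noncomputable def Matroid.rk {α : Type*} (M : Matroid α) (X : Set α) : ℕ :=
  sSup {n : ℕ | ∃ I, M.Indep I ∧ I ⊆ X ∧ I.ncard = n}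

section aux

variable {α : Type*} {M : Matroid α} [M.Finite] {I X Y F₁ F₂ : Set α}

private lemma rk_bdd (X : Set α) : BddAbove {n : ℕ | ∃ I, M.Indep I ∧ I ⊆ X ∧ I.ncard = n} := by
  refine ⟨M.E.ncard, ?_⟩
  rintro n ⟨I, hI, -, rfl⟩
  exact Set.ncard_le_ncard hI.subset_ground M.ground_finite

private lemma ncard_le_rk (hI : M.Indep I) (hIX : I ⊆ X) : I.ncard ≤ M.rk X :=
  le_csSup (rk_bdd X) ⟨I, hI, hIX, rfl⟩

private lemma rk_eq_ncard (hI : M.IsBasis I X) : M.rk X = I.ncard := by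
  refine le_antisymm (csSup_le ⟨I.ncard, I, hI.indep, hI.subset, rfl⟩ ?_) (ncard_le_rk hI.indep hI.subset)
  rintro n ⟨J, hJ, hJX, rfl⟩
  obtain ⟨J', hJ', hJJ'⟩ := hJ.subset_isBasis_of_subset hJX hI.subset_ground
  have h1 : J'.encard = I.encard := hJ'.encard_eq_encard hI
  have h2 : J.ncard ≤ J'.ncard :=
    Set.ncard_le_ncard hJJ' (M.set_finite J' hJ'.indep.subset_ground)
  have h3 : J'.ncard = I.ncard := by rw [Set.ncard_def, h1, ← Set.ncard_def]
  omega

private lemma rk_closure (hX : X ⊆ M.E) : M.rk (M.closure X) = M.rk X := by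
  obtain ⟨I, hI⟩ := M.exists_isBasis X hX
  rw [rk_eq_ncard hI.isBasis_closure_right, rk_eq_ncard hI]

private lemma rk_mono (hXY : X ⊆ Y) (hY : Y ⊆ M.E) : M.rk X ≤ M.rk Y := by
  obtain ⟨I, hI⟩ := M.exists_isBasis X (hXY.trans hY)
  rw [rk_eq_ncard hI]
  exact ncard_le_rk hI.indep (hI.subset.trans hXY)

private lemma rk_submod (hX : X ⊆ M.E) (hY : Y ⊆ M.E) :
    M.rk (X ∪ Y) + M.rk (X ∩ Y) ≤ M.rk X + M.rk Y := by
  obtain ⟨I, hI⟩ := M.exists_isBasis (X ∩ Y) ((Set.inter_subset_left).trans hX)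
  obtain ⟨J, hJ, hIJ⟩ := hI.indep.subset_isBasis_of_subset
    (hI.subset.trans (Set.inter_subset_left.trans Set.subset_union_left))
    (Set.union_subset hX hY)
  have hJfin : J.Finite := M.set_finite J hJ.indep.subset_ground
  have hu : (J ∩ X) ∪ (J ∩ Y) = J := by
    rw [← Set.inter_union_distrib_left, Set.inter_eq_left]; exact hJ.subset
  have hi : (J ∩ X) ∩ (J ∩ Y) = J ∩ (X ∩ Y) := by
    ext x; simp only [Set.mem_inter_iff]; tauto
  have key : (J ∩ X).ncard + (J ∩ Y).ncard = J.ncard + (J ∩ (X ∩ Y)).ncard := by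
    have := Set.ncard_union_add_ncard_inter (J ∩ X) (J ∩ Y)
      (hJfin.subset Set.inter_subset_left) (hJfin.subset Set.inter_subset_left)
    rw [hu, hi] at this
    omega
  have h1 : (J ∩ X).ncard ≤ M.rk X :=
    ncard_le_rk (hJ.indep.subset Set.inter_subset_left) Set.inter_subset_right
  have h2 : (J ∩ Y).ncard ≤ M.rk Y :=
    ncard_le_rk (hJ.indep.subset Set.inter_subset_left) Set.inter_subset_right
  have h3 : I.ncard ≤ (J ∩ (X ∩ Y)).ncard :=
    Set.ncard_le_ncard (Set.subset_inter hIJ hI.subset) (hJfin.subset Set.inter_subset_left)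
  rw [rk_eq_ncard hJ, rk_eq_ncard hI]
  omega

private lemma rk_union_le_add_ncard (hX : X ⊆ M.E) (hY : Y ⊆ M.E) :
    M.rk (X ∪ Y) ≤ M.rk X + Y.ncard := by
  obtain ⟨J, hJ⟩ := M.exists_isBasis (X ∪ Y) (Set.union_subset hX hY)
  have hJfin : J.Finite := M.set_finite J hJ.indep.subset_ground
  have h1 : J.ncard ≤ (J ∩ X).ncard + (J \ X).ncard := by
    rw [Set.ncard_inter_add_ncard_diff_eq_ncard J X hJfin]
  have h2 : (J ∩ X).ncard ≤ M.rk X :=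
    ncard_le_rk (hJ.indep.subset Set.inter_subset_left) Set.inter_subset_right
  have h3 : (J \ X).ncard ≤ Y.ncard := by
    refine Set.ncard_le_ncard (fun x hx => ?_) (M.set_finite Y hY)
    rcases hJ.subset hx.1 with h | h
    · exact absurd h hx.2
    · exact h
  rw [rk_eq_ncard hJ]
  omega

private lemma flat_eq_of_rk_le (h₁ : M.IsFlat F₁) (h₂ : M.IsFlat F₂) (hss : F₁ ⊆ F₂)
    (hrk : M.rk F₂ ≤ M.rk F₁) : F₁ = F₂ := by
  obtain ⟨I, hI⟩ := M.exists_isBasis F₁ h₁.subset_ground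
  obtain ⟨J, hJ, hIJ⟩ := hI.indep.subset_isBasis_of_subset (hI.subset.trans hss) h₂.subset_ground
  have hJfin : J.Finite := M.set_finite J hJ.indep.subset_ground
  have : I = J := Set.eq_of_subset_of_ncard_le hIJ
    (by rw [← rk_eq_ncard hJ, ← rk_eq_ncard hI]; exact hrk) hJfin
  have e1 : M.closure I = F₁ := by rw [hI.closure_eq_closure, h₁.closure]
  have e2 : M.closure J = F₂ := by rw [hJ.closure_eq_closure, h₂.closure]
  rw [← e1, ← e2, this]

omit [M.Finite] in
private lemma flat_closure' (X : Set α) : M.IsFlat (M.closure X) := by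
  refine ⟨fun I Y hI hIY => ?_, M.closure_subset_ground X⟩
  have hY : Y ⊆ M.closure I := hIY.subset_closure
  have h2 : M.closure I = M.closure X := by
    rw [hI.closure_eq_closure, Matroid.closure_closure]
  exact h2 ▸ hY

omit [M.Finite] in
private lemma flat_inter' (hF : M.IsFlat F₁) (hG : M.IsFlat F₂) : M.IsFlat (F₁ ∩ F₂) := by
  refine ⟨fun I Y hI hIY => ?_, Set.inter_subset_left.trans hF.subset_ground⟩
  have hY : Y ⊆ M.closure I := hIY.subset_closure
  have h2 : M.closure I = M.closure (F₁ ∩ F₂) := hI.closure_eq_closure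
  refine (hY.trans (h2 ▸ Set.subset_inter ?_ ?_))
  · exact (M.closure_subset_closure Set.inter_subset_left).trans hF.closure.subset
  · exact (M.closure_subset_closure Set.inter_subset_right).trans hG.closure.subset

end aux

/-- A flat `F` of a matroid `M` with finite ground set is modular if and only if for every
flat `G` and every flat `H ⊆ F` one has `(F ∧ G) ∨ H = F ∧ (G ∨ H)` in the lattice of
flats. -/
theorem modular_flat_iff_meet_join' {α : Type*} (M : Matroid α) [M.Finite]
    (F : Set α) (hF : M.IsFlat F) :
    (∀ G : Set α, M.IsFlat G → M.rk F + M.rk G = M.rk (F ∪ G) + M.rk (F ∩ G)) ↔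
    (∀ G H : Set α, M.IsFlat G → M.IsFlat H → H ⊆ F →
      M.closure ((F ∩ G) ∪ H) = F ∩ M.closure (G ∪ H)) := by
  have hFE := hF.subset_ground
  constructor
  · intro hmod G H hG hH hHF
    have hGE := hG.subset_ground
    have hHE := hH.subset_ground
    set L := M.closure (G ∪ H) with hLdef
    have hL : M.IsFlat L := flat_closure' _
    have hLE := hL.subset_ground
    set A : Set α := (F ∩ G) ∪ H with hAdef
    have hAF : A ⊆ F := Set.union_subset Set.inter_subset_left hHF
    have hAE : A ⊆ M.E := hAF.trans hFE
    -- LHS ⊆ RHS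
    have hsub : M.closure A ⊆ F ∩ L := by
      refine Set.subset_inter ?_ ?_
      · have := M.closure_subset_closure (X := A) (Y := F) hAF
        rwa [hF.closure] at this
      · exact M.closure_subset_closure
          (Set.union_subset (Set.inter_subset_right.trans Set.subset_union_left)
            Set.subset_union_right)
    -- rank bookkeeping
    have e1 := hmod L hL
    have e2 := hmod G hG
    have eFL : M.rk (F ∪ L) = M.rk (F ∪ G) := by
      have h1 : M.closure (F ∪ L) = M.closure (F ∪ G) := by
        rw [hLdef, closure_union_closure_right_eq]
        rw [Set.union_comm G H, ← Set.union_assoc, Set.union_eq_self_of_subset_right hHF]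
      rw [← rk_closure (Set.union_subset hFE hLE), h1,
        rk_closure (Set.union_subset hFE hGE)]
    have eL : M.rk L = M.rk (G ∪ H) := rk_closure (Set.union_subset hGE hHE)
    have hsubmod := rk_submod (M := M) hAE hGE
    have eAG : A ∪ G = G ∪ H := by
      ext x
      simp only [hAdef, Set.mem_union, Set.mem_inter_iff]
      tauto
    have hAiG : M.rk (F ∩ G) ≤ M.rk (A ∩ G) := by
      refine rk_mono ?_ ((Set.inter_subset_left).trans hAE)
      exact Set.subset_inter (Set.subset_union_left) Set.inter_subset_right
    rw [eAG] at hsubmod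
    -- conclude rk (F ∩ L) ≤ rk A
    have hrk : M.rk (F ∩ L) ≤ M.rk A := by
      have eGH : M.rk (G ∪ H) = M.rk L := eL.symm
      omega
    refine flat_eq_of_rk_le (flat_closure' A) (flat_inter' hF hL) hsub ?_
    rw [rk_closure hAE]
    exact hrk
  · intro hmj G hG
    have hGE := hG.subset_ground
    have hFG : M.IsFlat (F ∩ G) := flat_inter' hF hG
    obtain ⟨I, hI⟩ := M.exists_isBasis (F ∩ G) hFG.subset_ground
    obtain ⟨BG, hBG, hIBG⟩ := hI.indep.subset_isBasis_of_subset
      (hI.subset.trans Set.inter_subset_right) hGE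
    obtain ⟨B, hB, hBGB⟩ := hBG.indep.subset_isBasis_of_subset
      (Set.subset_union_left (s := BG) (t := F))
      (Set.union_subset (hBG.indep.subset_ground) hFE)
    have hBfin : B.Finite := M.set_finite B hB.indep.subset_ground
    set K : Set α := B \ BG with hKdef
    have hKF : K ⊆ F := by
      rintro x ⟨hxB, hxBG⟩
      rcases hB.subset hxB with h | h
      · exact absurd h hxBG
      · exact h
    have hIF : I ⊆ F := hI.subset.trans Set.inter_subset_left
    have hIKF : I ∪ K ⊆ F := Set.union_subset hIF hKF
    set H : Set α := M.closure (I ∪ K) with hHdef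
    have hH : M.IsFlat H := flat_closure' _
    have hHF : H ⊆ F := by
      have := M.closure_subset_closure (X := I ∪ K) (Y := F) hIKF
      rwa [hF.closure] at this
    -- closure of B ∪ G is everything
    have hclB : M.closure B = M.closure (F ∪ G) := by
      rw [hB.closure_eq_closure, ← closure_union_closure_left_eq,
        hBG.closure_eq_closure, closure_union_closure_left_eq, Set.union_comm]
    have hBeq : BG ∪ K = B := Set.union_diff_cancel hBGB
    have hFsub : F ⊆ M.closure (G ∪ H) := by
      have h1 : M.closure (G ∪ H) = M.closure (G ∪ (I ∪ K)) := by
        rw [hHdef, closure_union_closure_right_eq]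
      have h2 : B ⊆ G ∪ (I ∪ K) := by
        rw [← hBeq]
        exact Set.union_subset (hBG.subset.trans Set.subset_union_left)
          ((Set.subset_union_right (s := I)).trans Set.subset_union_right)
      have h3 : F ⊆ M.closure B := by
        rw [hclB]
        exact (Set.subset_union_left).trans
          (M.subset_closure _ (Set.union_subset hFE hGE))
      rw [h1]
      exact h3.trans (M.closure_subset_closure h2)
    have hmain := hmj G H hG hH hHF
    have hFeq : M.closure ((F ∩ G) ∪ H) = F := by
      rw [hmain, Set.inter_eq_left.mpr hFsub]
    -- rank computation
    have hrkF : M.rk F = M.rk ((F ∩ G) ∪ H) := by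
      have h5 := rk_closure (M := M) (X := (F ∩ G) ∪ H)
        (Set.union_subset (Set.inter_subset_left.trans hFE) (hHF.trans hFE))
      rw [hFeq] at h5
      exact h5
    have hKE : K ⊆ M.E := hKF.trans hFE
    have hFGE : F ∩ G ⊆ M.E := Set.inter_subset_left.trans hFE
    have step1 : M.rk ((F ∩ G) ∪ H) ≤ M.rk ((F ∩ G) ∪ (I ∪ K)) := by
      have hsub2 : (F ∩ G) ∪ H ⊆ M.closure ((F ∩ G) ∪ (I ∪ K)) :=
        Set.union_subset
          ((Set.subset_union_left).trans
            (M.subset_closure _ (Set.union_subset hFGE (hIKF.trans hFE))))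
          (hHdef ▸ M.closure_subset_closure Set.subset_union_right)
      have h6 := rk_mono hsub2 (M.closure_subset_ground _)
      rwa [rk_closure (Set.union_subset hFGE (hIKF.trans hFE))] at h6
    have step2 : (F ∩ G) ∪ (I ∪ K) = (F ∩ G) ∪ K := by
      rw [← Set.union_assoc, Set.union_eq_self_of_subset_right hI.subset]
    have step3 : M.rk ((F ∩ G) ∪ K) ≤ M.rk (F ∩ G) + K.ncard :=
      rk_union_le_add_ncard hFGE hKE
    have hcard : BG.ncard + K.ncard = B.ncard := by
      have : (B \ BG).ncard + BG.ncard = B.ncard :=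
        Set.ncard_diff_add_ncard_of_subset hBGB hBfin
      rw [← hKdef] at this
      omega
    have hrkG : M.rk G = BG.ncard := rk_eq_ncard hBG
    have hrkFG : M.rk (F ∪ G) = B.ncard := by
      rw [← rk_closure (Set.union_subset hFE hGE), ← hclB,
        rk_closure hB.indep.subset_ground, rk_eq_ncard hB.indep.isBasis_self]
    have hsubmod := rk_submod (M := M) hFE hGE
    rw [step2] at step1
    omega
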